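/- For every positive integer n, the function P_n : (0,1) → ℝ given by P_n(p) = binom(n, np)·p^(np)·(1-p)^(n(1-p)) is convex on (0,1). -/

import Mathlib

open Real Filter Topology

/-- Generalized binomial coefficient `binom(n, α) = n! / (Γ(α+1)·Γ(n-α+1))`. -/
noncomputable def gbinom (n : ℕ) (a : ℝ) : ℝ :=
  (n.factorial : ℝ) / (Real.Gamma (a + 1) * Real.Gamma ((n : ℝ) - a + 1))

/-- The function `P_n(p) = binom(n, np) · p^(np) · (1-p)^(n(1-p))`. -/
noncomputable def Pn (n : ℕ) (p : ℝ) : ℝ :=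
  gbinom n ((n : ℝ) * p) * p ^ ((n : ℝ) * p) * (1 - p) ^ ((n : ℝ) * (1 - p))

/-- derivative of `(x+c) * log (x+c)` -/
lemma hasDerivAt_xlogx (c x : ℝ) (h : 0 < x + c) :
    HasDerivAt (fun y : ℝ => (y + c) * Real.log (y + c)) (Real.log (x + c) + 1) x := by
  have h1 : HasDerivAt (fun y : ℝ => y + c) 1 x := (hasDerivAt_id x).add_const c
  have h2 : HasDerivAt (fun y : ℝ => Real.log (y + c)) ((x + c)⁻¹ * 1) x :=
    by have := (Real.hasDerivAt_log h.ne').comp x h1; exact this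
  have h3 := h1.mul h2
  exact h3.congr_deriv (by rw [mul_one, mul_inv_cancel₀ h.ne', one_mul])

lemma hasDerivAt_logx (c x : ℝ) (h : 0 < x + c) :
    HasDerivAt (fun y : ℝ => Real.log (y + c)) ((x + c)⁻¹) x := by
  simpa [Function.comp_def] using (Real.hasDerivAt_log h.ne').comp x ((hasDerivAt_id x).add_const c)

lemma hasDerivAt_invx (c x : ℝ) (h : 0 < x + c) :
    HasDerivAt (fun y : ℝ => (y + c)⁻¹) (-((x + c)^2)⁻¹) x := by
  simpa [Function.comp_def] using (hasDerivAt_inv h.ne').comp x ((hasDerivAt_id x).add_const c)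


lemma convexOn_G (a b : ℝ) (ha : 0 ≤ a) (hb : b = a + 1) :
    ConvexOn ℝ (Set.Ioi (0:ℝ)) (fun x =>
      (x + a) * Real.log (x + a) - (x + b) * Real.log (x + b) + Real.log (x + b)) := by
  have key : ∀ x ∈ Set.Ioi (0:ℝ), 0 < x + a := fun x hx => by
    have : (0:ℝ) < x := hx; linarith
  have key1 : ∀ x ∈ Set.Ioi (0:ℝ), 0 < x + b := fun x hx => by
    have : (0:ℝ) < x := hx; linarith
  have hd1 : ∀ x ∈ Set.Ioi (0:ℝ), HasDerivAt (fun x =>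
      (x + a) * Real.log (x + a) - (x + b) * Real.log (x + b) + Real.log (x + b))
      (Real.log (x + a) - Real.log (x + b) + (x + b)⁻¹) x := by
    intro x hx
    have h2 := ((hasDerivAt_xlogx a x (key x hx)).sub (hasDerivAt_xlogx b x (key1 x hx))).add
      (hasDerivAt_logx b x (key1 x hx))
    exact h2.congr_deriv (by ring)
  have hd2 : ∀ x ∈ Set.Ioi (0:ℝ), HasDerivAt (fun x =>
      Real.log (x + a) - Real.log (x + b) + (x + b)⁻¹)
      ((x + a)⁻¹ - (x + b)⁻¹ - ((x + b)^2)⁻¹) x := by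
    intro x hx
    have h2 := ((hasDerivAt_logx a x (key x hx)).sub (hasDerivAt_logx b x (key1 x hx))).add
      (hasDerivAt_invx b x (key1 x hx))
    exact h2.congr_deriv (by ring)
  apply convexOn_of_hasDerivWithinAt2_nonneg (convex_Ioi 0)
    (f' := fun x => Real.log (x + a) - Real.log (x + b) + (x + b)⁻¹)
    (f'' := fun x => (x + a)⁻¹ - (x + b)⁻¹ - ((x + b)^2)⁻¹)
  · exact fun x hx => (hd1 x hx).continuousAt.continuousWithinAt
  · rw [interior_Ioi]; exact fun x hx => (hd1 x hx).hasDerivWithinAt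
  · rw [interior_Ioi]; exact fun x hx => (hd2 x hx).hasDerivWithinAt
  · rw [interior_Ioi]
    intro x hx
    have h1 := key x hx
    have h2 := key1 x hx
    have h : (x+a)⁻¹ - (x+b)⁻¹ - ((x+b)^2)⁻¹ = ((x+a)*((x+b)^2))⁻¹ := by
      subst hb; field_simp; ring
    rw [h]
    positivity

lemma convexOn_F (c : ℝ) (hc : 0 ≤ c) :
    ConvexOn ℝ (Set.Ioi (0:ℝ)) (fun x => (x + c) * Real.log (x + c)) := by
  have key : ∀ x ∈ Set.Ioi (0:ℝ), 0 < x + c := fun x hx => by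
    have : (0:ℝ) < x := hx; linarith
  apply convexOn_of_hasDerivWithinAt2_nonneg (convex_Ioi 0)
    (f' := fun x => Real.log (x + c) + 1)
    (f'' := fun x => (x + c)⁻¹)
  · exact fun x hx => (hasDerivAt_xlogx c x (key x hx)).continuousAt.continuousWithinAt
  · rw [interior_Ioi]; exact fun x hx => (hasDerivAt_xlogx c x (key x hx)).hasDerivWithinAt
  · rw [interior_Ioi]
    exact fun x hx => ((hasDerivAt_logx c x (key x hx)).add_const 1).hasDerivWithinAt
  · rw [interior_Ioi]; exact fun x hx => (inv_nonneg.mpr (key x hx).le)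

lemma convexOn_finset_sum {ι : Type*} (t : Finset ι) {s : Set ℝ} (hs : Convex ℝ s)
    {f : ι → ℝ → ℝ} (h : ∀ i ∈ t, ConvexOn ℝ s (f i)) :
    ConvexOn ℝ s (fun x => ∑ i ∈ t, f i x) := by
  classical
  induction t using Finset.induction with
  | empty => simpa using convexOn_const 0 hs
  | @insert i t hnot ih =>
    simp only [Finset.sum_insert hnot]
    exact (h i (Finset.mem_insert_self i t)).add
      (ih fun j hj => h j (Finset.mem_insert_of_mem hj))

lemma convexOn_affine (c d : ℝ) {s : Set ℝ} (hs : Convex ℝ s) :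
    ConvexOn ℝ s (fun x => c * x + d) := by
  refine ⟨hs, fun x hx y hy a b ha hb hab => le_of_eq ?_⟩
  simp only [smul_eq_mul]
  linear_combination (-d) * hab

lemma convexOn_limit {s : Set ℝ} (hs : Convex ℝ s) {f : ℕ → ℝ → ℝ} {g : ℝ → ℝ}
    (hc : ∀ᶠ m in atTop, ConvexOn ℝ s (f m))
    (hl : ∀ x ∈ s, Tendsto (fun m => f m x) atTop (𝓝 (g x))) : ConvexOn ℝ s g := by
  refine ⟨hs, fun x hx y hy a b ha hb hab => ?_⟩
  have hxy : a • x + b • y ∈ s := hs hx hy ha hb hab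
  refine le_of_tendsto_of_tendsto (hl _ hxy)
    (((hl x hx).const_mul a).add ((hl y hy).const_mul b)) ?_
  filter_upwards [hc] with m hm
  simpa [smul_eq_mul] using hm.2 hx hy ha hb hab

noncomputable def Efun (m : ℕ) (x : ℝ) : ℝ :=
  (∑ j ∈ Finset.range (m+1),
      ((x + (j:ℝ)) * Real.log (x + (j:ℝ)) - (x + ((j:ℝ)+1)) * Real.log (x + ((j:ℝ)+1))
        + Real.log (x + ((j:ℝ)+1))))
    + (x + ((m:ℝ)+1)) * Real.log (x + ((m:ℝ)+1))
    + ((-(Real.log m)) * x + (-(Real.log m) - Real.log (Nat.factorial m)))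

lemma convexOn_Efun (m : ℕ) : ConvexOn ℝ (Set.Ioi (0:ℝ)) (Efun m) :=
  ((convexOn_finset_sum _ (convex_Ioi 0)
      (fun (j : ℕ) _ => convexOn_G (j:ℝ) ((j:ℝ)+1) (Nat.cast_nonneg j) rfl)).add
    (convexOn_F ((m:ℝ)+1) (by positivity))).add
    (convexOn_affine _ _ (convex_Ioi 0))

lemma Efun_eq (m : ℕ) (hm : 1 ≤ m) (x : ℝ) (hx : 0 < x) :
    Efun m x = x * Real.log x - Real.log (Real.GammaSeq (x+1) m) := by
  have hm0 : (0:ℝ) < m := by exact_mod_cast hm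
  have hprod : ∀ j ∈ Finset.range (m+1), (x + 1 + (j:ℝ)) ≠ 0 := by
    intro j _
    have : (0:ℝ) ≤ (j:ℝ) := Nat.cast_nonneg j
    positivity
  have hprodpos : (0:ℝ) < ∏ j ∈ Finset.range (m+1), (x + 1 + (j:ℝ)) := by
    apply Finset.prod_pos
    intro j _
    have : (0:ℝ) ≤ (j:ℝ) := Nat.cast_nonneg j
    positivity
  have hlogGS : Real.log (Real.GammaSeq (x+1) m)
      = (x+1) * Real.log m + Real.log (Nat.factorial m)
        - ∑ j ∈ Finset.range (m+1), Real.log (x + 1 + (j:ℝ)) := by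
    unfold Real.GammaSeq
    rw [Real.log_div (by positivity) hprodpos.ne',
      Real.log_mul (by positivity) (by positivity),
      Real.log_rpow hm0, Real.log_prod hprod]
  -- telescoping
  have htel : ∑ j ∈ Finset.range (m+1),
      ((x + (j:ℝ)) * Real.log (x + (j:ℝ)) - (x + ((j:ℝ)+1)) * Real.log (x + ((j:ℝ)+1))
        + Real.log (x + ((j:ℝ)+1)))
      = (x * Real.log x - (x + ((m:ℝ)+1)) * Real.log (x + ((m:ℝ)+1)))
        + ∑ j ∈ Finset.range (m+1), Real.log (x + 1 + (j:ℝ)) := by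
    rw [Finset.sum_add_distrib]
    congr 1
    · have h0 := Finset.sum_range_sub' (fun j : ℕ => (x + (j:ℝ)) * Real.log (x + (j:ℝ))) (m+1)
      push_cast at h0
      simp only [add_zero] at h0
      rw [← h0]
    · apply Finset.sum_congr rfl
      intro j _
      ring_nf
  unfold Efun
  rw [htel, hlogGS]
  ring

lemma convexOn_u : ConvexOn ℝ (Set.Ioi (0:ℝ))
    (fun x => x * Real.log x - Real.log (Real.Gamma (x+1))) := by
  apply convexOn_limit (convex_Ioi 0) (f := fun m x => Efun m x)
  · exact Eventually.of_forall convexOn_Efun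
  · intro x hx
    have hx0 : (0:ℝ) < x := hx
    have hG : (0:ℝ) < Real.Gamma (x+1) := Real.Gamma_pos_of_pos (by linarith)
    have h1 : Tendsto (fun m : ℕ => x * Real.log x - Real.log (Real.GammaSeq (x+1) m)) atTop
        (𝓝 (x * Real.log x - Real.log (Real.Gamma (x+1)))) :=
      tendsto_const_nhds.sub ((Real.GammaSeq_tendsto_Gamma (x+1)).log hG.ne')
    refine h1.congr' ?_
    filter_upwards [eventually_ge_atTop 1] with m hm
    exact (Efun_eq m hm x hx0).symm

lemma Pn_eq (n : ℕ) (hn : 0 < n) {p : ℝ} (hp : p ∈ Set.Ioo (0:ℝ) 1) :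
    Pn n p = Real.exp (Real.log (Nat.factorial n) - n * Real.log n
      + (((n:ℝ)*p) * Real.log ((n:ℝ)*p) - Real.log (Real.Gamma ((n:ℝ)*p+1)))
      + (((n:ℝ)*(1-p)) * Real.log ((n:ℝ)*(1-p)) - Real.log (Real.Gamma ((n:ℝ)*(1-p)+1)))) := by
  obtain ⟨hp0, hp1⟩ := hp
  have hq0 : (0:ℝ) < 1 - p := by linarith
  have hn0 : (0:ℝ) < n := by exact_mod_cast hn
  have hG1 : 0 < Real.Gamma ((n:ℝ)*p+1) := Real.Gamma_pos_of_pos (by positivity)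
  have hG2 : 0 < Real.Gamma ((n:ℝ)*(1-p)+1) := Real.Gamma_pos_of_pos (by positivity)
  have hfac : (0:ℝ) < (Nat.factorial n : ℝ) := by
    exact_mod_cast Nat.factorial_pos n
  have hPn : Pn n p = ((Nat.factorial n : ℝ)
      / (Real.Gamma ((n:ℝ)*p+1) * Real.Gamma ((n:ℝ)*(1-p)+1)))
      * p ^ ((n:ℝ)*p) * (1-p) ^ ((n:ℝ)*(1-p)) := by
    unfold Pn gbinom
    rw [show (n:ℝ) - (n:ℝ)*p = (n:ℝ)*(1-p) by ring]
  have hpos : 0 < Pn n p := by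
    rw [hPn]; positivity
  rw [← Real.exp_log hpos]
  congr 1
  rw [hPn, Real.log_mul (by positivity) (by positivity),
    Real.log_mul (by positivity) (by positivity),
    Real.log_div (by positivity) (by positivity), Real.log_mul hG1.ne' hG2.ne',
    Real.log_rpow hp0, Real.log_rpow hq0,
    Real.log_mul hn0.ne' hp0.ne', Real.log_mul hn0.ne' hq0.ne']
  ring

/-- For every positive integer `n`, the function `P_n` is convex on `(0,1)`. -/
theorem Pn_convex (n : ℕ) (hn : 0 < n) :
    ConvexOn ℝ (Set.Ioo (0:ℝ) 1) (Pn n) := by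
  have hn0 : (0:ℝ) < n := by exact_mod_cast hn
  set u : ℝ → ℝ := fun t => t * Real.log t - Real.log (Real.Gamma (t+1)) with hu_def
  have hu : ConvexOn ℝ (Set.Ioi (0:ℝ)) u := convexOn_u
  set C : ℝ := Real.log (Nat.factorial n) - n * Real.log n with hC_def
  have hE : ∀ p ∈ Set.Ioo (0:ℝ) 1,
      Pn n p = Real.exp (C + u ((n:ℝ)*p) + u ((n:ℝ)*(1-p))) := fun p hp => Pn_eq n hn hp
  refine ⟨convex_Ioo 0 1, fun x hx y hy a b ha hb hab => ?_⟩
  have hz : a • x + b • y ∈ Set.Ioo (0:ℝ) 1 := (convex_Ioo 0 1) hx hy ha hb hab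
  rw [hE _ hz, hE _ hx, hE _ hy]
  set z : ℝ := a • x + b • y with hz_def
  have hzx : (0:ℝ) < x := hx.1
  have hzy : (0:ℝ) < y := hy.1
  have hux : u ((n:ℝ)*z) ≤ a * u ((n:ℝ)*x) + b * u ((n:ℝ)*y) := by
    have := hu.2 (show (n:ℝ)*x ∈ Set.Ioi (0:ℝ) by exact mul_pos hn0 hzx)
      (show (n:ℝ)*y ∈ Set.Ioi (0:ℝ) by exact mul_pos hn0 hzy) ha hb hab
    simp only [smul_eq_mul] at this ⊢
    have harg : a * ((n:ℝ)*x) + b * ((n:ℝ)*y) = (n:ℝ)*z := by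
      simp only [hz_def, smul_eq_mul]; ring
    rwa [harg] at this
  have huy : u ((n:ℝ)*(1-z)) ≤ a * u ((n:ℝ)*(1-x)) + b * u ((n:ℝ)*(1-y)) := by
    have := hu.2 (show (n:ℝ)*(1-x) ∈ Set.Ioi (0:ℝ) by
        exact mul_pos hn0 (by linarith [hx.2]))
      (show (n:ℝ)*(1-y) ∈ Set.Ioi (0:ℝ) by exact mul_pos hn0 (by linarith [hy.2])) ha hb hab
    simp only [smul_eq_mul] at this ⊢
    have harg : a * ((n:ℝ)*(1-x)) + b * ((n:ℝ)*(1-y)) = (n:ℝ)*(1-z) := by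
      simp only [hz_def, smul_eq_mul]
      linear_combination (n:ℝ) * hab
    rwa [harg] at this
  have hsum : C + u ((n:ℝ)*z) + u ((n:ℝ)*(1-z))
      ≤ a * (C + u ((n:ℝ)*x) + u ((n:ℝ)*(1-x))) + b * (C + u ((n:ℝ)*y) + u ((n:ℝ)*(1-y))) := by
    have hC : C = a * C + b * C := by linear_combination C * hab.symm
    nlinarith [hux, huy]
  calc Real.exp (C + u ((n:ℝ)*z) + u ((n:ℝ)*(1-z)))
      ≤ Real.exp (a * (C + u ((n:ℝ)*x) + u ((n:ℝ)*(1-x)))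
          + b * (C + u ((n:ℝ)*y) + u ((n:ℝ)*(1-y)))) := Real.exp_le_exp.2 hsum
    _ ≤ a • Real.exp (C + u ((n:ℝ)*x) + u ((n:ℝ)*(1-x)))
          + b • Real.exp (C + u ((n:ℝ)*y) + u ((n:ℝ)*(1-y))) := by
        simpa [smul_eq_mul] using
          convexOn_exp.2 (Set.mem_univ (C + u ((n:ℝ)*x) + u ((n:ℝ)*(1-x))))
            (Set.mem_univ (C + u ((n:ℝ)*y) + u ((n:ℝ)*(1-y)))) ha hb hab
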